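/- Let D be a set with |D| > 2 and let a, c be distinct elements of D. Define two operations on D by: x ⊣ y = a if x = y = a, x ⊣ y = c if x = a and y ≠ a, and x ⊣ y = x if x ≠ a; and x ⊢ y = a if x = y = a, and x ⊢ y = c otherwise. Then (D,⊣,⊢) is a dimonoid which is nonabelian and noncommutative, has empty halo (no bar-units), and a bijection f : D → D is an automorphism of (D,⊣,⊢) if and only if f(a) = a and f(c) = c; hence its automorphism group is isomorphic to S_{D∖{a,c}}. -/

import Mathlib

/-- A dimonoid: two associative operations `ld` (⊣) and `rd` (⊢) satisfying
axioms (D1), (D2), (D3). -/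
def IsDimonoid {D : Type*} (ld rd : D → D → D) : Prop :=
  (∀ x y z, ld (ld x y) z = ld x (ld y z)) ∧
  (∀ x y z, rd (rd x y) z = rd x (rd y z)) ∧
  (∀ x y z, ld (ld x y) z = ld x (rd y z)) ∧
  (∀ x y z, ld (rd x y) z = rd x (ld y z)) ∧
  (∀ x y z, rd (ld x y) z = rd x (rd y z))

/-- The automorphism group of a magma `(D, op)`, as a subgroup of `Equiv.Perm D`. -/
def semigroupAutGroup {D : Type*} (op : D → D → D) : Subgroup (Equiv.Perm D) where
  carrier := {f : Equiv.Perm D | ∀ x y, f (op x y) = op (f x) (f y)}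
  one_mem' := fun _ _ => rfl
  mul_mem' := by
    intro f g hf hg
    simp only [Set.mem_setOf_eq] at hf hg ⊢
    intro x y
    simp [Equiv.Perm.mul_apply, hg, hf]
  inv_mem' := by
    intro f hf
    simp only [Set.mem_setOf_eq] at hf ⊢
    intro x y
    apply f.injective
    rw [hf]
    simp

/-- The automorphism group of a dimonoid `(D, ld, rd)`. -/
def dimonoidAutGroup {D : Type*} (ld rd : D → D → D) : Subgroup (Equiv.Perm D) :=
  semigroupAutGroup ld ⊓ semigroupAutGroup rd

/-- The dimonoid `LOB_D ⋈ O_D^{{a}}` (for `|D| > 2` and distinct `a, c`):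
with `x ⊣ y` given by the `LOB_D` operation and `x ⊢ y = a` if `x = y = a`,
`x ⊢ y = c` otherwise, one gets a nonabelian noncommutative dimonoid with empty
halo, whose automorphisms are exactly the bijections fixing `a` and `c`, so its
automorphism group is isomorphic to `S_{D∖{a,c}}`. -/
theorem LOB_D_null_dimonoid {D : Type*} (a c : D) (hac : a ≠ c)
    (hD : ∃ b : D, b ≠ a ∧ b ≠ c) (ld rd : D → D → D)
    (hld1 : ld a a = a)
    (hld2 : ∀ y, y ≠ a → ld a y = c)
    (hld3 : ∀ x y, x ≠ a → ld x y = x)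
    (hrd1 : rd a a = a)
    (hrd2 : ∀ x y, ¬ (x = a ∧ y = a) → rd x y = c) :
    IsDimonoid ld rd ∧
    (¬ ∀ x y, ld x y = rd y x) ∧
    (¬ ((∀ x y, ld x y = ld y x) ∧ (∀ x y, rd x y = rd y x))) ∧
    (¬ ∃ e : D, ∀ d, rd e d = d ∧ ld d e = d) ∧
    (∀ f : Equiv.Perm D,
      ((∀ x y, f (ld x y) = ld (f x) (f y)) ∧ (∀ x y, f (rd x y) = rd (f x) (f y))) ↔
      (f a = a ∧ f c = c)) ∧
    Nonempty (↥(dimonoidAutGroup ld rd) ≃* Equiv.Perm ↥(({a, c} : Set D)ᶜ)) := by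
  classical
  obtain ⟨b, hba, hbc⟩ := hD
  have hca : c ≠ a := fun h => hac h.symm
  have ldA : ∀ x y, ld x y = if x = a then (if y = a then a else c) else x := by
    intro x y
    by_cases hx : x = a
    · by_cases hy : y = a
      · rw [hx, hy, hld1]; simp
      · rw [hx, hld2 y hy]; simp [hy]
    · rw [hld3 x y hx]; simp [hx]
  have rdA : ∀ x y, rd x y = if x = a ∧ y = a then a else c := by
    intro x y
    by_cases h : x = a ∧ y = a
    · rw [h.1, h.2, hrd1]; simp
    · rw [hrd2 x y h]; simp [h]
  have hdim : IsDimonoid ld rd := by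
    refine ⟨?_, ?_, ?_, ?_, ?_⟩ <;> intro x y z <;>
      simp only [ldA, rdA] <;> split_ifs <;> simp_all
  have key : ∀ f : Equiv.Perm D,
      ((∀ x y, f (ld x y) = ld (f x) (f y)) ∧ (∀ x y, f (rd x y) = rd (f x) (f y))) ↔
      (f a = a ∧ f c = c) := by
    intro f
    constructor
    · rintro ⟨hfl, hfr⟩
      have hfa : f a = a := by
        by_contra hfa
        have h2 : f a = c := by
          have h1 := hfr a a
          rw [hrd1, hrd2 (f a) (f a) (fun h => hfa h.1)] at h1
          exact h1
        have h3 : f c = rd (f b) (f b) := by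
          rw [← hfr, hrd2 b b (fun h => hba h.1)]
        by_cases hfb : f b = a
        · have h4 : f c = a := by rw [h3, hfb, hrd1]
          exact hbc (f.injective (hfb.trans h4.symm))
        · have h4 : f c = c := by rw [h3, hrd2 _ _ (fun h => hfb h.1)]
          exact hac (f.injective (h2.trans h4.symm))
      refine ⟨hfa, ?_⟩
      have hfb : f b ≠ a := fun h => hba (f.injective (h.trans hfa.symm))
      have : f (rd a b) = rd a (f b) := by rw [hfr, hfa]
      rw [hrd2 a b (fun h => hba h.2), hrd2 a (f b) (fun h => hfb h.2)] at this
      exact this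
    · rintro ⟨hfa, hfc⟩
      have hinj : ∀ x, f x = a ↔ x = a := by
        intro x
        constructor
        · intro h; exact f.injective (h.trans hfa.symm)
        · intro h; subst h; exact hfa
      constructor
      · intro x y
        by_cases hx : x = a
        · by_cases hy : y = a
          · rw [hx, hy, hld1, hfa, hld1]
          · rw [hx, hld2 y hy, hfc, hfa, hld2 _ (fun h => hy ((hinj y).mp h))]
        · rw [hld3 x y hx, hld3 _ _ (fun h => hx ((hinj x).mp h))]
      · intro x y
        by_cases h : x = a ∧ y = a
        · rw [h.1, h.2, hrd1, hfa, hrd1]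
        · rw [hrd2 x y h, hfc, hrd2 _ _ (fun hh => h ⟨(hinj x).mp hh.1, (hinj y).mp hh.2⟩)]
  have memiff : ∀ f : Equiv.Perm D,
      f ∈ dimonoidAutGroup ld rd ↔ (f a = a ∧ f c = c) := by
    intro f
    rw [← key f]
    rfl
  refine ⟨hdim, ?_, ?_, ?_, key, ?_⟩
  · intro h
    have h1 := h b a
    rw [hld3 b a hba, hrd2 a b (fun hh => hba hh.2)] at h1
    exact hbc h1
  · rintro ⟨h, -⟩
    have h1 := h b a
    rw [hld3 b a hba] at h1
    by_cases hb : a = a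
    · rw [hld2 b hba] at h1; exact hbc h1
    · exact hb rfl
  · rintro ⟨e, he⟩
    have h1 := (he b).1
    rw [hrd2 e b (fun h => hba h.2)] at h1
    exact hbc h1.symm
  · -- the isomorphism
    set P : D → Prop := fun x => x ∈ (({a, c} : Set D)ᶜ) with hP
    have hPiff : ∀ x, P x ↔ (x ≠ a ∧ x ≠ c) := by
      intro x
      simp [hP]
    have hpres : ∀ f : Equiv.Perm D, f a = a → f c = c → ∀ x, P x ↔ P (f x) := by
      intro f hfa hfc x
      rw [hPiff, hPiff]
      constructor
      · rintro ⟨h1, h2⟩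
        exact ⟨fun h => h1 (f.injective (h.trans hfa.symm)),
               fun h => h2 (f.injective (h.trans hfc.symm))⟩
      · rintro ⟨h1, h2⟩
        exact ⟨fun h => h1 (by rw [h, hfa]), fun h => h2 (by rw [h, hfc])⟩
    let φ : ↥(dimonoidAutGroup ld rd) →* Equiv.Perm (Subtype P) :=
      MonoidHom.mk' (fun f => Equiv.Perm.subtypePerm (f : Equiv.Perm D)
        (fun x => (hpres f ((memiff f).mp f.2).1 ((memiff f).mp f.2).2 x).symm))
        (by
          intro f g
          ext x
          rfl)
    have hφinj : Function.Injective φ := by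
      intro f g hfg
      ext x
      by_cases hx : P x
      · have := congrArg (fun e => (e ⟨x, hx⟩ : Subtype P).val) hfg
        exact this
      · have hx' : x = a ∨ x = c := by
          rw [hPiff] at hx
          by_cases h1 : x = a
          · exact Or.inl h1
          · exact Or.inr (by by_contra h2; exact hx ⟨h1, h2⟩)
        obtain ⟨hfa, hfc⟩ := (memiff f).mp f.2
        obtain ⟨hga, hgc⟩ := (memiff g).mp g.2
        rcases hx' with h | h <;> subst h
        · rw [hfa, hga]
        · rw [hfc, hgc]
    have hφsurj : Function.Surjective φ := by
      intro g
      let f : Equiv.Perm D := g.extendDomain (Equiv.refl (Subtype P))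
      have hfa : f a = a := by
        apply Equiv.Perm.extendDomain_apply_not_subtype
        rw [hPiff]
        intro h
        exact h.1 rfl
      have hfc : f c = c := by
        apply Equiv.Perm.extendDomain_apply_not_subtype
        rw [hPiff]
        intro h
        exact h.2 rfl
      refine ⟨⟨f, (memiff f).mpr ⟨hfa, hfc⟩⟩, ?_⟩
      ext x
      have hx := x.2
      have h1 : ((φ ⟨f, (memiff f).mpr ⟨hfa, hfc⟩⟩ x : Subtype P) : D) = f x.val := rfl
      rw [h1]
      have h2 := Equiv.Perm.extendDomain_apply_subtype g (Equiv.refl (Subtype P)) hx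
      rw [h2]
      rfl
    exact ⟨MulEquiv.ofBijective φ ⟨hφinj, hφsurj⟩⟩
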